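/- In an inverse betting game ⟨V_∃, V_∀, E, (v₀,c₀), w⟩ with all weights bounded below by W > 0 and every vertex having two successors whose outgoing weights sum to 1: if from every vertex Eve has a strategy ensuring a visit to a target set T, then for every bound B ∈ ℝ, Eve has a strategy ensuring that the play reaches a configuration in (T × [c₀, +∞)) ∪ (V × [B, +∞)), where in Eve's vertices Adam distributes the current credit c over the two successors as d₁, d₂ with w₁·d₁ + w₂·d₂ = c and Eve picks the successor, and in Adam's vertices Adam moves keeping the credit unchanged. -/

import Mathlib

open Set

/-- An inverse betting game: each vertex belongs to Eve or Adam, has exactly two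
successors (indexed by `Bool`), and the weights of the two outgoing edges of each
vertex are bounded below by `W > 0` and sum to `1`. -/
structure IBG (V : Type) where
  isEve : V → Bool
  succ : V → Bool → V
  w : V → Bool → ℝ
  W : ℝ
  hWpos : 0 < W
  hWle : ∀ v i, W ≤ w v i
  hsum : ∀ v, w v true + w v false = 1

namespace IBG

variable {V : Type} (G : IBG V)

/-- A play of the underlying reachability game from `v`, consistent with Eve's
(history-dependent) graph strategy `σ`: Eve picks the successor at her vertices,
Adam picks arbitrarily at his. -/
def GraphPlay (σ : List V → Bool) (v : V) (ρ : ℕ → V) : Prop :=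
  ρ 0 = v ∧ ∀ n,
    (G.isEve (ρ n) = true →
      ρ (n + 1) = G.succ (ρ n) (σ (List.ofFn fun i : Fin (n + 1) => ρ i))) ∧
    (G.isEve (ρ n) = false → ∃ i, ρ (n + 1) = G.succ (ρ n) i)

/-- A play of the inverse betting game from configuration `(v₀, c₀)`, consistent with
Eve's strategy `σ`. At Eve's vertices Adam distributes the current credit `c` over the
two successors as `d` with `w₁·d₁ + w₂·d₂ = c` and Eve (via `σ`, seeing the history and
Adam's proposal) picks the successor, inheriting the proposed credit; at Adam's
vertices Adam picks the successor and the credit is unchanged. -/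
def BetPlay (σ : List (V × ℝ) → (Bool → ℝ) → Bool) (v₀ : V) (c₀ : ℝ)
    (π : ℕ → V × ℝ) : Prop :=
  π 0 = (v₀, c₀) ∧ ∀ n,
    (G.isEve (π n).1 = true →
      ∃ d : Bool → ℝ,
        G.w (π n).1 true * d true + G.w (π n).1 false * d false = (π n).2 ∧
        π (n + 1) = (G.succ (π n).1 (σ (List.ofFn fun i : Fin (n + 1) => π i) d),
                     d (σ (List.ofFn fun i : Fin (n + 1) => π i) d))) ∧
    (G.isEve (π n).1 = false → ∃ i, π (n + 1) = (G.succ (π n).1 i, (π n).2))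

end IBG

noncomputable section IBGAux

namespace IBGAux

set_option linter.unusedSectionVars false

open Classical

variable {V : Type} (G : IBG V) (T : Set V)

/-- Attractor levels for Eve towards `T`. -/
def att : ℕ → Set V
  | 0 => T
  | n + 1 => att n ∪ {u | if G.isEve u = true then ∃ i, G.succ u i ∈ att n
      else ∀ i, G.succ u i ∈ att n}

lemma att_zero : att G T 0 = T := rfl

lemma att_succ (n : ℕ) : att G T (n + 1) = att G T n ∪
    {u | if G.isEve u = true then ∃ i, G.succ u i ∈ att G T n
      else ∀ i, G.succ u i ∈ att G T n} := rfl

lemma att_mono : Monotone (att G T) :=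
  monotone_nat_of_le_succ (fun _ => Set.subset_union_left)

lemma att_total
    (hreach : ∀ v : V, ∃ σg : List V → Bool,
      ∀ ρ : ℕ → V, G.GraphPlay σg v ρ → ∃ n, ρ n ∈ T)
    (v : V) : ∃ n, v ∈ att G T n := by
  by_contra hv
  push_neg at hv
  have hEveS : ∀ u, (∀ n, u ∉ att G T n) → G.isEve u = true →
      ∀ (i : Bool) (n : ℕ), G.succ u i ∉ att G T n := by
    intro u hu hE i n hmem
    apply hu (n + 1)
    rw [att_succ]
    exact Or.inr (by simp only [Set.mem_setOf_eq, if_pos hE]; exact ⟨i, hmem⟩)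
  have hAdamS : ∀ u, (∀ n, u ∉ att G T n) → G.isEve u = false →
      ∃ i, ∀ n, G.succ u i ∉ att G T n := by
    intro u hu hE
    by_contra hc
    push_neg at hc
    obtain ⟨nt, hnt⟩ := hc true
    obtain ⟨nf, hnf⟩ := hc false
    apply hu (max nt nf + 1)
    rw [att_succ]
    refine Or.inr ?_
    simp only [Set.mem_setOf_eq, hE]
    intro i
    cases i
    · exact att_mono G T (le_max_right nt nf) hnf
    · exact att_mono G T (le_max_left nt nf) hnt
  obtain ⟨σg, hσg⟩ := hreach v
  let bad : V → Bool := fun u =>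
    if h : ∃ i, ∀ n, G.succ u i ∉ att G T n then h.choose else true
  let step : List V → V := fun L =>
    if G.isEve (L.getLastD v) = true then G.succ (L.getLastD v) (σg L)
    else G.succ (L.getLastD v) (bad (L.getLastD v))
  let l : ℕ → List V := fun n => Nat.rec [v] (fun _ ih => ih ++ [step ih]) n
  let ρ : ℕ → V := fun n => (l n).getLastD v
  have hρ0 : ρ 0 = v := rfl
  have hρsucc : ∀ n, ρ (n + 1) = step (l n) := by
    intro n
    show (l n ++ [step (l n)]).getLastD v = step (l n)
    simp
  have hstepEve : ∀ n, G.isEve (ρ n) = true → step (l n) = G.succ (ρ n) (σg (l n)) := by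
    intro n hE
    show (if G.isEve ((l n).getLastD v) = true then _ else _) = _
    rw [if_pos hE]
  have hstepAdam : ∀ n, G.isEve (ρ n) = false → step (l n) = G.succ (ρ n) (bad (ρ n)) := by
    intro n hE
    have hE' : ¬ (G.isEve ((l n).getLastD v) = true) := by
      intro hcon
      rw [show G.isEve ((l n).getLastD v) = G.isEve (ρ n) from rfl, hE] at hcon
      exact Bool.false_ne_true hcon
    show (if G.isEve ((l n).getLastD v) = true then _ else _) = _
    rw [if_neg hE']
  have hS : ∀ n m, ρ n ∉ att G T m := by
    intro n
    induction n with
    | zero => exact hv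
    | succ n ih =>
      intro m
      rw [hρsucc n]
      cases hE : G.isEve (ρ n) with
      | true =>
        rw [hstepEve n hE]
        exact hEveS (ρ n) ih hE _ m
      | false =>
        rw [hstepAdam n hE]
        have hex : ∃ i, ∀ k, G.succ (ρ n) i ∉ att G T k := hAdamS (ρ n) ih hE
        have hbad : bad (ρ n) = hex.choose := dif_pos hex
        rw [hbad]
        exact hex.choose_spec m
  have hofn : ∀ n, l n = List.ofFn (fun i : Fin (n + 1) => ρ i) := by
    intro n
    induction n with
    | zero =>
      show [v] = _
      have : (fun i : Fin 1 => ρ (i : ℕ)) = fun _ => v := by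
        funext i
        have hi : (i : ℕ) = 0 := by omega
        rw [hi, hρ0]
      rw [this]
      simp
    | succ n ih =>
      show l n ++ [step (l n)] = _
      rw [List.ofFn_succ' (f := fun i : Fin (n + 2) => ρ i), List.concat_eq_append]
      have h1 : (List.ofFn fun i : Fin (n + 1) => ρ ((i.castSucc : Fin (n + 2)) : ℕ)) = l n := by
        rw [ih]
        congr 1
      rw [h1]
      have h2 : ρ ((Fin.last (n + 1) : Fin (n + 2)) : ℕ) = step (l n) := by
        rw [Fin.val_last]
        exact hρsucc n
      rw [h2]
  have hplay : G.GraphPlay σg v ρ := by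
    refine ⟨hρ0, fun n => ⟨?_, ?_⟩⟩
    · intro hE
      rw [hρsucc n, hstepEve n hE, ← hofn n]
    · intro hE
      exact ⟨bad (ρ n), by rw [hρsucc n, hstepAdam n hE]⟩
  obtain ⟨n, hn⟩ := hσg ρ hplay
  exact hS n 0 hn

/-- Rank of a vertex: least attractor level containing it. -/
def rank (u : V) : ℕ := if h : ∃ n, u ∈ att G T n then Nat.find h else 0

section RankFacts

lemma rank_spec (htot : ∀ u : V, ∃ n, u ∈ att G T n) (u : V) : u ∈ att G T (rank G T u) := by
  rw [rank, dif_pos (htot u)]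
  exact Nat.find_spec (htot u)

lemma rank_le (htot : ∀ u : V, ∃ n, u ∈ att G T n) {u : V} {n : ℕ} (h : u ∈ att G T n) : rank G T u ≤ n := by
  rw [rank, dif_pos (htot u)]
  exact Nat.find_le h

lemma rank_not_mem (htot : ∀ u : V, ∃ n, u ∈ att G T n) {u : V} {j : ℕ} (h : j < rank G T u) : u ∉ att G T j := by
  rw [rank, dif_pos (htot u)] at h
  exact Nat.find_min (htot u) h

lemma rank_eq_zero_iff (htot : ∀ u : V, ∃ n, u ∈ att G T n) {u : V} : rank G T u = 0 ↔ u ∈ T := by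
  constructor
  · intro h
    have := rank_spec G T htot u
    rw [h, att_zero] at this
    exact this
  · intro h
    exact Nat.le_zero.mp (rank_le G T htot (by rwa [att_zero]))

lemma rank_succ_eve (htot : ∀ u : V, ∃ n, u ∈ att G T n) {u : V} (hE : G.isEve u = true) (h1 : 1 ≤ rank G T u) :
    ∃ i, rank G T (G.succ u i) < rank G T u := by
  obtain ⟨j, hj⟩ : ∃ j, rank G T u = j + 1 := ⟨rank G T u - 1, by omega⟩
  have hmem : u ∈ att G T (j + 1) := by rw [← hj]; exact rank_spec G T htot u
  have hnot : u ∉ att G T j := rank_not_mem G T htot (by omega)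
  rw [att_succ] at hmem
  rcases hmem with h | h
  · exact absurd h hnot
  · simp only [Set.mem_setOf_eq, if_pos hE] at h
    obtain ⟨i, hi⟩ := h
    exact ⟨i, by have := rank_le G T htot hi; omega⟩

lemma rank_succ_adam (htot : ∀ u : V, ∃ n, u ∈ att G T n) {u : V} (hE : G.isEve u = false) (h1 : 1 ≤ rank G T u) :
    ∀ i, rank G T (G.succ u i) < rank G T u := by
  obtain ⟨j, hj⟩ : ∃ j, rank G T u = j + 1 := ⟨rank G T u - 1, by omega⟩
  have hmem : u ∈ att G T (j + 1) := by rw [← hj]; exact rank_spec G T htot u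
  have hnot : u ∉ att G T j := rank_not_mem G T htot (by omega)
  rw [att_succ] at hmem
  rcases hmem with h | h
  · exact absurd h hnot
  · simp only [Set.mem_setOf_eq, hE] at h
    simp only [Bool.false_eq_true, if_false] at h
    intro i
    have := rank_le G T htot (h i)
    omega

end RankFacts

variable [Fintype V]

/-- Max rank. -/
def NN : ℕ := Finset.univ.sup (rank G T)

lemma rank_le_NN (u : V) : rank G T u ≤ NN G T :=
  Finset.le_sup (Finset.mem_univ u)

def gg : ℝ := 8 / G.W + 1

def al : ℝ := 1 / gg G ^ NN G T

def ss : ℝ := 1 + al G T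

def QQ (k : ℕ) : ℝ := 1 + al G T * (gg G ^ (NN G T - k) - 1)

lemma gg_pos : 0 < gg G := by
  have h := G.hWpos
  have : 0 < 8 / G.W := by positivity
  rw [gg]; linarith

lemma one_le_gg : 1 ≤ gg G := by
  have h := G.hWpos
  have : 0 < 8 / G.W := by positivity
  rw [gg]; linarith

lemma hW_half (u : V) : G.W ≤ 1 / 2 := by
  have h1 := G.hWle u true
  have h2 := G.hWle u false
  have h3 := G.hsum u
  linarith

lemma gg_ge (u : V) : 17 ≤ gg G := by
  have h0 := G.hWpos
  have h1 := hW_half G u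
  have : (16 : ℝ) ≤ 8 / G.W := by
    rw [le_div_iff₀ h0]; linarith
  rw [gg]; linarith

lemma hWgg : G.W * gg G = 8 + G.W := by
  have h0 := G.hWpos.ne'
  rw [gg, mul_add, mul_div_assoc', mul_comm G.W 8, mul_div_assoc, div_self h0]; ring

lemma al_pos : 0 < al G T := by
  have := gg_pos G
  rw [al]; positivity

lemma al_le_one : al G T ≤ 1 := by
  have h := one_le_gg G
  rw [al]
  rw [div_le_one (by positivity)]
  exact one_le_pow₀ h

lemma al_mul_pow_le {k : ℕ} (hg : 17 ≤ gg G) (hk1 : 1 ≤ k) (hkN : k ≤ NN G T) :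
    al G T * gg G ^ (NN G T - k) ≤ 1 / 17 := by
  have hgpos := gg_pos G
  have hpowN : gg G ^ (NN G T - k) * gg G ^ k = gg G ^ NN G T := by
    rw [← pow_add, Nat.sub_add_cancel hkN]
  have h17 : (17 : ℝ) ≤ gg G ^ k := by
    calc (17 : ℝ) ≤ gg G := hg
    _ = gg G ^ 1 := (pow_one _).symm
    _ ≤ gg G ^ k := pow_le_pow_right₀ (one_le_gg G) hk1
  have heq : al G T * gg G ^ (NN G T - k) = 1 / gg G ^ k := by
    rw [al]
    rw [div_mul_eq_mul_div, one_mul, ← hpowN]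
    rw [div_eq_div_iff (by positivity) (by positivity)]
    ring
  rw [heq]
  rw [div_le_div_iff₀ (by positivity) (by norm_num)]
  linarith

lemma one_le_QQ (k : ℕ) : 1 ≤ QQ G T k := by
  have h1 : (1 : ℝ) ≤ gg G ^ (NN G T - k) := one_le_pow₀ (one_le_gg G)
  have h2 := al_pos G T
  rw [QQ]; nlinarith

lemma QQ_pos (k : ℕ) : 0 < QQ G T k := lt_of_lt_of_le one_pos (one_le_QQ G T k)

lemma QQ_le_two (k : ℕ) : QQ G T k ≤ 2 := by
  have h2 := al_pos G T
  have hgpos := gg_pos G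
  have h3 : gg G ^ (NN G T - k) ≤ gg G ^ NN G T :=
    pow_le_pow_right₀ (one_le_gg G) (Nat.sub_le _ _)
  have h4 : al G T * gg G ^ (NN G T - k) ≤ 1 := by
    rw [al]
    rw [div_mul_eq_mul_div, one_mul, div_le_one (by positivity)]
    exact h3
  rw [QQ]; nlinarith

lemma QQ_anti {j k : ℕ} (h : j ≤ k) : QQ G T k ≤ QQ G T j := by
  have h2 := (al_pos G T).le
  have h3 : gg G ^ (NN G T - k) ≤ gg G ^ (NN G T - j) :=
    pow_le_pow_right₀ (one_le_gg G) (Nat.sub_le_sub_left h _)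
  rw [QQ, QQ]; nlinarith

lemma QQ_pred {k : ℕ} (hk1 : 1 ≤ k) (hkN : k ≤ NN G T) :
    QQ G T (k - 1) = 1 + al G T * (gg G ^ (NN G T - k) * gg G - 1) := by
  rw [QQ]
  congr 3
  have : NN G T - (k - 1) = (NN G T - k) + 1 := by omega
  rw [this, pow_succ]

lemma ineq_C1 {k : ℕ} (hg : 17 ≤ gg G) (hk1 : 1 ≤ k) (hkN : k ≤ NN G T) :
    ss G T * QQ G T k ≤ QQ G T (k - 1) := by
  have hA0 := al_pos G T
  have hA1 := al_le_one G T
  have hK1 : (1 : ℝ) ≤ gg G ^ (NN G T - k) := one_le_pow₀ (one_le_gg G)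
  rw [ss, QQ, QQ_pred G T hk1 hkN]
  set A := al G T with hA
  set K := gg G ^ (NN G T - k) with hK
  have h1 : A ≤ A * K := le_mul_of_one_le_right hA0.le hK1
  have h2 : A * (A * K) ≤ 1 * (A * K) :=
    mul_le_mul_of_nonneg_right hA1 (by nlinarith)
  have h3 : 17 * (A * K) ≤ gg G * (A * K) :=
    mul_le_mul_of_nonneg_right hg (by nlinarith)
  nlinarith


lemma hW_half' (hg : 17 ≤ gg G) : G.W ≤ 1 / 2 := by
  have h0 := G.hWpos
  rw [gg] at hg
  have h1 : (16 : ℝ) ≤ 8 / G.W := by linarith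
  rw [le_div_iff₀ h0] at h1
  linarith

lemma al_le_inv17 (hg : 17 ≤ gg G) (hN1 : 1 ≤ NN G T) : al G T ≤ 1 / 17 := by
  have h := al_mul_pow_le G T hg hN1 (le_refl (NN G T))
  simpa using h

lemma ineq_C3 {k : ℕ} (hg : 17 ≤ gg G) (hk1 : 1 ≤ k) (hkN : k ≤ NN G T) :
    (ss G T * QQ G T k - 1) * QQ G T (k - 1) ≤ G.W * (QQ G T (k - 1) - ss G T * QQ G T k) := by
  have hA0 := al_pos G T
  have hN1 : 1 ≤ NN G T := le_trans hk1 hkN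
  have hA17 : al G T ≤ 1 / 17 := al_le_inv17 G T hg hN1
  have hAK : al G T * gg G ^ (NN G T - k) ≤ 1 / 17 := al_mul_pow_le G T hg hk1 hkN
  have hW0 := G.hWpos
  have hW2 : G.W ≤ 1 / 2 := hW_half' G hg
  have hQexp : QQ G T (k - 1) = 1 + al G T * (gg G ^ (NN G T - k) * gg G - 1) :=
    QQ_pred G T hk1 hkN
  have hQ2 : QQ G T (k - 1) ≤ 2 := QQ_le_two G T _
  have hQge1 : 1 ≤ QQ G T (k - 1) := one_le_QQ G T _
  set A := al G T with hA
  set K := gg G ^ (NN G T - k) with hK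
  have hK1 : (1 : ℝ) ≤ K := one_le_pow₀ (one_le_gg G)
  have hKpos : (0 : ℝ) < K := lt_of_lt_of_le one_pos hK1
  have hX : ss G T * QQ G T k - 1 = A * K + A * (A * K) - A * A := by
    rw [ss, QQ]; ring
  have hX0 : 0 ≤ ss G T * QQ G T k - 1 := by rw [hX]; nlinarith
  have hXle : ss G T * QQ G T k - 1 ≤ (18 / 17) * (A * K) := by rw [hX]; nlinarith
  have hAKpos : 0 < A * K := mul_pos hA0 hKpos
  have hL : (ss G T * QQ G T k - 1) * QQ G T (k - 1) ≤ (36 / 17) * (A * K) := by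
    nlinarith [mul_le_mul hXle hQ2 (by linarith [hQge1]) (by positivity)]
  have hR : G.W * (QQ G T (k - 1) - ss G T * QQ G T k)
      = 8 * (A * K) - G.W * A - G.W * (A * (A * K)) + G.W * (A * A) := by
    rw [hQexp, ss, QQ]
    linear_combination (A * K) * hWgg G
  rw [hR]
  have hWA : G.W * A ≤ (1 / 2) * (A * K) := by nlinarith
  have hWAAK : G.W * (A * (A * K)) ≤ (1 / 2) * ((1 / 17) * (A * K)) := by nlinarith
  nlinarith [mul_nonneg (mul_nonneg hW0.le hA0.le) hA0.le]

lemma ss_pos : 0 < ss G T := by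
  have := al_pos G T
  rw [ss]; linarith

lemma one_lt_ss : 1 < ss G T := by
  have := al_pos G T
  rw [ss]; linarith

/-- A successor decreasing the rank (for Eve's vertices of positive rank). -/
def goodIdx (u : V) : Bool :=
  if h : ∃ i, rank G T (G.succ u i) < rank G T u then h.choose else true

lemma goodIdx_spec {u : V} (h : ∃ i, rank G T (G.succ u i) < rank G T u) :
    rank G T (G.succ u (goodIdx G T u)) < rank G T u := by
  rw [goodIdx, dif_pos h]
  exact h.choose_spec

def lam (u : V) : ℝ :=
  ss G T * QQ G T (rank G T u) / QQ G T (rank G T (G.succ u (goodIdx G T u)))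

lemma lam_pos (u : V) : 0 < lam G T u := by
  rw [lam]
  exact div_pos (mul_pos (ss_pos G T) (QQ_pos G T _)) (QQ_pos G T _)

/-- Eve's strategy in the betting game. -/
def strat (v₀ : V) (c₀ : ℝ) : List (V × ℝ) → (Bool → ℝ) → Bool := fun hist d =>
  let p := hist.getLastD (v₀, c₀)
  if c₀ + lam G T p.1 * (p.2 - c₀) ≤ d (goodIdx G T p.1) then goodIdx G T p.1
  else !(goodIdx G T p.1)

lemma ofFn_getLastD {X : Type} {n : ℕ} (f : Fin (n + 1) → X) (y : X) :
    (List.ofFn f).getLastD y = f (Fin.last n) := by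
  rw [List.ofFn_succ']
  simp

lemma bool_pair (f g : Bool → ℝ) (i : Bool) :
    f i * g i + f (!i) * g (!i) = f true * g true + f false * g false := by
  cases i <;> simp only [Bool.not_true, Bool.not_false] <;> ring

lemma bool_sum (f : Bool → ℝ) (i : Bool) : f i + f (!i) = f true + f false := by
  cases i <;> simp only [Bool.not_true, Bool.not_false] <;> ring

lemma lam_mul (u : V) :
    lam G T u * QQ G T (rank G T (G.succ u (goodIdx G T u))) = ss G T * QQ G T (rank G T u) :=
  div_mul_cancel₀ _ (QQ_pos G T _).ne'

end IBGAux

end IBGAux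

/-- If from every vertex Eve can ensure visiting the target set `T`, then for every
bound `B` Eve has a strategy in the inverse betting game ensuring that the play
reaches a configuration in `(T × [c₀, ∞)) ∪ (V × [B, ∞))`. -/
theorem stmt_18 {V : Type} [Fintype V] (G : IBG V) (T : Set V)
    (hreach : ∀ v : V, ∃ σg : List V → Bool,
      ∀ ρ : ℕ → V, G.GraphPlay σg v ρ → ∃ n, ρ n ∈ T)
    (v₀ : V) (c₀ : ℝ) (B : ℝ) :
    ∃ σ : List (V × ℝ) → (Bool → ℝ) → Bool,
      ∀ π : ℕ → V × ℝ, G.BetPlay σ v₀ c₀ π →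
        ∃ n, ((π n).1 ∈ T ∧ c₀ ≤ (π n).2) ∨ B ≤ (π n).2 := by
  classical
  rcases le_or_gt B c₀ with hB | hB
  · refine ⟨fun _ _ => true, fun π hπ => ⟨0, Or.inr ?_⟩⟩
    rw [hπ.1]
    exact hB
  have htot : ∀ u : V, ∃ n, u ∈ IBGAux.att G T n := IBGAux.att_total G T hreach
  have hg : 17 ≤ IBGAux.gg G := IBGAux.gg_ge G v₀
  have hW0 := G.hWpos
  refine ⟨IBGAux.strat G T v₀ c₀, fun π hπ => ?_⟩
  by_contra hno
  push_neg at hno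
  -- hno : ∀ n, ((π n).1 ∈ T → (π n).2 < c₀) ∧ (π n).2 < B
  have key : ∀ n, c₀ ≤ (π n).2 →
      (c₀ ≤ (π (n + 1)).2 ∧
       IBGAux.ss G T * (((π n).2 - c₀) * IBGAux.QQ G T (IBGAux.rank G T (π n).1))
         ≤ ((π (n + 1)).2 - c₀) * IBGAux.QQ G T (IBGAux.rank G T (π (n + 1)).1) ∧
       ((π n).2 = c₀ → c₀ < (π (n + 1)).2 ∨
          IBGAux.rank G T (π (n + 1)).1 < IBGAux.rank G T (π n).1)) := by
    intro n hc
    have he0 : 0 ≤ (π n).2 - c₀ := by linarith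
    have hrk1 : 1 ≤ IBGAux.rank G T (π n).1 := by
      rcases Nat.eq_zero_or_pos (IBGAux.rank G T (π n).1) with h0 | h1
      · exfalso
        have hT : (π n).1 ∈ T := (IBGAux.rank_eq_zero_iff G T htot).mp h0
        exact absurd hc (not_le.mpr ((hno n).1 hT))
      · exact h1
    have hrkN : IBGAux.rank G T (π n).1 ≤ IBGAux.NN G T := IBGAux.rank_le_NN G T _
    cases hE : G.isEve (π n).1 with
    | false =>
      obtain ⟨i, hstep⟩ := (hπ.2 n).2 hE
      have h1 : (π (n + 1)).1 = G.succ (π n).1 i := by rw [hstep]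
      have h2 : (π (n + 1)).2 = (π n).2 := by rw [hstep]
      have hrlt : IBGAux.rank G T (π (n + 1)).1 < IBGAux.rank G T (π n).1 := by
        rw [h1]; exact IBGAux.rank_succ_adam G T htot hE hrk1 i
      refine ⟨by rw [h2]; exact hc, ?_, fun _ => Or.inr hrlt⟩
      have hQc : IBGAux.ss G T * IBGAux.QQ G T (IBGAux.rank G T (π n).1)
          ≤ IBGAux.QQ G T (IBGAux.rank G T (π (n + 1)).1) := by
        calc IBGAux.ss G T * IBGAux.QQ G T (IBGAux.rank G T (π n).1)
            ≤ IBGAux.QQ G T (IBGAux.rank G T (π n).1 - 1) := IBGAux.ineq_C1 G T hg hrk1 hrkN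
          _ ≤ IBGAux.QQ G T (IBGAux.rank G T (π (n + 1)).1) :=
              IBGAux.QQ_anti G T (by omega)
      calc IBGAux.ss G T * (((π n).2 - c₀) * IBGAux.QQ G T (IBGAux.rank G T (π n).1))
          = ((π n).2 - c₀) * (IBGAux.ss G T * IBGAux.QQ G T (IBGAux.rank G T (π n).1)) := by
            ring
        _ ≤ ((π n).2 - c₀) * IBGAux.QQ G T (IBGAux.rank G T (π (n + 1)).1) :=
            mul_le_mul_of_nonneg_left hQc he0
        _ = ((π (n + 1)).2 - c₀) * IBGAux.QQ G T (IBGAux.rank G T (π (n + 1)).1) := by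
            rw [h2]
    | true =>
      obtain ⟨d, hdsum, hstep⟩ := (hπ.2 n).1 hE
      have hlast : (List.ofFn fun i : Fin (n + 1) => π i).getLastD (v₀, c₀) = π n := by
        rw [IBGAux.ofFn_getLastD]
        simp
      have hex : ∃ i, IBGAux.rank G T (G.succ (π n).1 i) < IBGAux.rank G T (π n).1 :=
        IBGAux.rank_succ_eve G T htot hE hrk1
      have hgood : IBGAux.rank G T (G.succ (π n).1 (IBGAux.goodIdx G T (π n).1))
          < IBGAux.rank G T (π n).1 := IBGAux.goodIdx_spec G T hex
      have hQm0 : IBGAux.QQ G T (IBGAux.rank G T (π n).1 - 1)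
          ≤ IBGAux.QQ G T (IBGAux.rank G T (G.succ (π n).1 (IBGAux.goodIdx G T (π n).1))) :=
        IBGAux.QQ_anti G T (by omega)
      have hlampos : 0 < IBGAux.lam G T (π n).1 := IBGAux.lam_pos G T _
      have hlamle1 : IBGAux.lam G T (π n).1 ≤ 1 := by
        rw [IBGAux.lam, div_le_one (IBGAux.QQ_pos G T _)]
        calc IBGAux.ss G T * IBGAux.QQ G T (IBGAux.rank G T (π n).1)
            ≤ IBGAux.QQ G T (IBGAux.rank G T (π n).1 - 1) := IBGAux.ineq_C1 G T hg hrk1 hrkN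
          _ ≤ _ := hQm0
      have hsval : IBGAux.strat G T v₀ c₀ (List.ofFn fun i : Fin (n + 1) => π i) d
          = if c₀ + IBGAux.lam G T (π n).1 * ((π n).2 - c₀)
              ≤ d (IBGAux.goodIdx G T (π n).1) then IBGAux.goodIdx G T (π n).1
            else !(IBGAux.goodIdx G T (π n).1) := by
        simp only [IBGAux.strat, hlast]
      by_cases hacc : c₀ + IBGAux.lam G T (π n).1 * ((π n).2 - c₀)
          ≤ d (IBGAux.goodIdx G T (π n).1)
      · -- Eve accepts the rank-decreasing successor
        have hσ : IBGAux.strat G T v₀ c₀ (List.ofFn fun i : Fin (n + 1) => π i) d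
            = IBGAux.goodIdx G T (π n).1 := by rw [hsval, if_pos hacc]
        rw [hσ] at hstep
        have h1 : (π (n + 1)).1 = G.succ (π n).1 (IBGAux.goodIdx G T (π n).1) := by rw [hstep]
        have h2 : (π (n + 1)).2 = d (IBGAux.goodIdx G T (π n).1) := by rw [hstep]
        have hle : 0 ≤ IBGAux.lam G T (π n).1 * ((π n).2 - c₀) :=
          mul_nonneg hlampos.le he0
        have hcr : c₀ ≤ (π (n + 1)).2 := by rw [h2]; linarith
        refine ⟨hcr, ?_, ?_⟩
        · have hmm := IBGAux.lam_mul G T (π n).1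
          calc IBGAux.ss G T * (((π n).2 - c₀) * IBGAux.QQ G T (IBGAux.rank G T (π n).1))
              = (IBGAux.lam G T (π n).1 * ((π n).2 - c₀)) *
                  IBGAux.QQ G T (IBGAux.rank G T
                    (G.succ (π n).1 (IBGAux.goodIdx G T (π n).1))) := by
                linear_combination (c₀ - (π n).2) * hmm
            _ ≤ ((π (n + 1)).2 - c₀) *
                  IBGAux.QQ G T (IBGAux.rank G T
                    (G.succ (π n).1 (IBGAux.goodIdx G T (π n).1))) := by
                apply mul_le_mul_of_nonneg_right _ (IBGAux.QQ_pos G T _).le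
                rw [h2]; linarith
            _ = ((π (n + 1)).2 - c₀) * IBGAux.QQ G T (IBGAux.rank G T (π (n + 1)).1) := by
                rw [h1]
        · intro h0
          rcases lt_or_eq_of_le hcr with hlt | heq
          · exact Or.inl hlt
          · refine Or.inr ?_
            rw [h1]
            exact hgood
      · -- Eve deflects to the other successor
        push_neg at hacc
        have hσ : IBGAux.strat G T v₀ c₀ (List.ofFn fun i : Fin (n + 1) => π i) d
            = !(IBGAux.goodIdx G T (π n).1) := by rw [hsval, if_neg (not_le.mpr hacc)]
        rw [hσ] at hstep
        have h1 : (π (n + 1)).1 = G.succ (π n).1 (!(IBGAux.goodIdx G T (π n).1)) := by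
          rw [hstep]
        have h2 : (π (n + 1)).2 = d (!(IBGAux.goodIdx G T (π n).1)) := by rw [hstep]
        set i0 := IBGAux.goodIdx G T (π n).1 with hi0
        have hw : G.w (π n).1 i0 * d i0 + G.w (π n).1 (!i0) * d (!i0) = (π n).2 :=
          (IBGAux.bool_pair (G.w (π n).1) d i0).trans hdsum
        have hwsum : G.w (π n).1 i0 + G.w (π n).1 (!i0) = 1 :=
          (IBGAux.bool_sum (G.w (π n).1) i0).trans (G.hsum (π n).1)
        have hw0 : G.W ≤ G.w (π n).1 i0 := G.hWle _ _
        have hw1 : G.W ≤ G.w (π n).1 (!i0) := G.hWle _ _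
        have hw1pos : 0 < G.w (π n).1 (!i0) := lt_of_lt_of_le hW0 hw1
        have hw1le1 : G.w (π n).1 (!i0) ≤ 1 := by linarith
        -- c - d i0 is at least (1 - lam) * e ≥ 0
        have hcd0 : 0 ≤ (π n).2 - d i0 := by nlinarith
        have heq1 : G.w (π n).1 (!i0) * (d (!i0) - (π n).2)
            = G.w (π n).1 i0 * ((π n).2 - d i0) := by
          linear_combination hw - (π n).2 * hwsum
        have hpos1 : 0 ≤ d (!i0) - (π n).2 := by nlinarith
        have hd1c : G.W * ((π n).2 - d i0) ≤ d (!i0) - (π n).2 := by nlinarith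
        have hcr : c₀ ≤ (π (n + 1)).2 := by rw [h2]; linarith
        refine ⟨hcr, ?_, ?_⟩
        · -- potential grows
          have hcoef : IBGAux.ss G T * IBGAux.QQ G T (IBGAux.rank G T (π n).1)
              ≤ 1 + G.W * (1 - IBGAux.lam G T (π n).1) := by
            have hq1pos : 0 < IBGAux.QQ G T (IBGAux.rank G T (π n).1 - 1) :=
              IBGAux.QQ_pos G T _
            have hC3 := IBGAux.ineq_C3 G T hg hrk1 hrkN
            have hlamle : IBGAux.lam G T (π n).1
                ≤ IBGAux.ss G T * IBGAux.QQ G T (IBGAux.rank G T (π n).1) /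
                    IBGAux.QQ G T (IBGAux.rank G T (π n).1 - 1) := by
              rw [IBGAux.lam]
              exact div_le_div_of_nonneg_left
                (mul_nonneg (IBGAux.ss_pos G T).le (IBGAux.QQ_pos G T _).le) hq1pos hQm0
            have h5 : IBGAux.ss G T * IBGAux.QQ G T (IBGAux.rank G T (π n).1) - 1
                ≤ G.W * (IBGAux.QQ G T (IBGAux.rank G T (π n).1 - 1) -
                    IBGAux.ss G T * IBGAux.QQ G T (IBGAux.rank G T (π n).1)) /
                    IBGAux.QQ G T (IBGAux.rank G T (π n).1 - 1) := by
              rw [le_div_iff₀ hq1pos]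
              linarith
            have h6 : G.W * (IBGAux.QQ G T (IBGAux.rank G T (π n).1 - 1) -
                IBGAux.ss G T * IBGAux.QQ G T (IBGAux.rank G T (π n).1)) /
                IBGAux.QQ G T (IBGAux.rank G T (π n).1 - 1)
                = G.W * (1 - IBGAux.ss G T * IBGAux.QQ G T (IBGAux.rank G T (π n).1) /
                    IBGAux.QQ G T (IBGAux.rank G T (π n).1 - 1)) := by
              field_simp
            have h7 : G.W * (1 - IBGAux.ss G T * IBGAux.QQ G T (IBGAux.rank G T (π n).1) /
                IBGAux.QQ G T (IBGAux.rank G T (π n).1 - 1))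
                ≤ G.W * (1 - IBGAux.lam G T (π n).1) := by
              apply mul_le_mul_of_nonneg_left _ hW0.le
              linarith
            rw [h6] at h5
            linarith
          have hQ1' : (1 : ℝ) ≤ IBGAux.QQ G T (IBGAux.rank G T (π (n + 1)).1) :=
            IBGAux.one_le_QQ G T _
          have hEgain : (1 + G.W * (1 - IBGAux.lam G T (π n).1)) * ((π n).2 - c₀)
              ≤ (π (n + 1)).2 - c₀ := by
            rw [h2]
            nlinarith [hd1c, mul_le_mul_of_nonneg_left hacc.le hW0.le]
          have hE0 : 0 ≤ (π (n + 1)).2 - c₀ := by linarith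
          calc IBGAux.ss G T * (((π n).2 - c₀) * IBGAux.QQ G T (IBGAux.rank G T (π n).1))
              = (IBGAux.ss G T * IBGAux.QQ G T (IBGAux.rank G T (π n).1)) * ((π n).2 - c₀) := by
                ring
            _ ≤ (1 + G.W * (1 - IBGAux.lam G T (π n).1)) * ((π n).2 - c₀) :=
                mul_le_mul_of_nonneg_right hcoef he0
            _ ≤ (π (n + 1)).2 - c₀ := hEgain
            _ = ((π (n + 1)).2 - c₀) * 1 := by ring
            _ ≤ ((π (n + 1)).2 - c₀) * IBGAux.QQ G T (IBGAux.rank G T (π (n + 1)).1) :=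
                mul_le_mul_of_nonneg_left hQ1' hE0
        · -- from zero credit excess, credit strictly increases
          intro h0
          refine Or.inl ?_
          have hd0lt : d i0 < (π n).2 := by
            have := hacc
            rw [h0] at this ⊢
            simpa using by linarith [this, mul_nonneg hlampos.le (by linarith : (0:ℝ) ≤ (π n).2 - c₀)]
          have : 0 < G.W * ((π n).2 - d i0) := mul_pos hW0 (by linarith)
          rw [h2] at *
          linarith [hd1c]
  -- credit never goes below c₀
  have hInv : ∀ n, c₀ ≤ (π n).2 := by
    intro n
    induction n with
    | zero => rw [hπ.1]
    | succ n ih => exact (key n ih).1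
  -- potential grows geometrically
  have hgrow : ∀ m j, IBGAux.ss G T ^ j *
      (((π m).2 - c₀) * IBGAux.QQ G T (IBGAux.rank G T (π m).1))
      ≤ ((π (m + j)).2 - c₀) * IBGAux.QQ G T (IBGAux.rank G T (π (m + j)).1) := by
    intro m j
    induction j with
    | zero => simp
    | succ j ih =>
      have h1 := (key (m + j) (hInv (m + j))).2.1
      calc IBGAux.ss G T ^ (j + 1) *
          (((π m).2 - c₀) * IBGAux.QQ G T (IBGAux.rank G T (π m).1))
          = IBGAux.ss G T * (IBGAux.ss G T ^ j *
              (((π m).2 - c₀) * IBGAux.QQ G T (IBGAux.rank G T (π m).1))) := by ring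
        _ ≤ IBGAux.ss G T *
              (((π (m + j)).2 - c₀) * IBGAux.QQ G T (IBGAux.rank G T (π (m + j)).1)) :=
            mul_le_mul_of_nonneg_left ih (IBGAux.ss_pos G T).le
        _ ≤ ((π (m + j + 1)).2 - c₀) * IBGAux.QQ G T (IBGAux.rank G T (π (m + j + 1)).1) := h1
  -- eventually the credit exceeds c₀ strictly
  have hepos : ∃ m, c₀ < (π m).2 := by
    by_contra hall
    push_neg at hall
    have heqc : ∀ m, (π m).2 = c₀ := fun m => le_antisymm (hall m) (hInv m)
    have hdec : ∀ n, IBGAux.rank G T (π (n + 1)).1 < IBGAux.rank G T (π n).1 := by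
      intro n
      rcases (key n (hInv n)).2.2 (heqc n) with h | h
      · exact absurd h (by rw [heqc (n + 1)]; exact lt_irrefl c₀)
      · exact h
    have hb : ∀ n, IBGAux.rank G T (π n).1 + n ≤ IBGAux.rank G T (π 0).1 := by
      intro n
      induction n with
      | zero => simp
      | succ n ih =>
        have := hdec n
        omega
    have := hb (IBGAux.rank G T (π 0).1 + 1)
    omega
  obtain ⟨m, hm⟩ := hepos
  have hPm : 0 < ((π m).2 - c₀) * IBGAux.QQ G T (IBGAux.rank G T (π m).1) :=
    mul_pos (by linarith) (IBGAux.QQ_pos G T _)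
  obtain ⟨j, hj⟩ : ∃ j : ℕ, 2 * (B - c₀) /
      (((π m).2 - c₀) * IBGAux.QQ G T (IBGAux.rank G T (π m).1)) < IBGAux.ss G T ^ j :=
    pow_unbounded_of_one_lt _ (IBGAux.one_lt_ss G T)
  rw [div_lt_iff₀ hPm] at hj
  have h3 : 2 * (B - c₀) <
      ((π (m + j)).2 - c₀) * IBGAux.QQ G T (IBGAux.rank G T (π (m + j)).1) :=
    lt_of_lt_of_le hj (hgrow m j)
  have h4 : ((π (m + j)).2 - c₀) * IBGAux.QQ G T (IBGAux.rank G T (π (m + j)).1)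
      ≤ 2 * ((π (m + j)).2 - c₀) := by
    have hq := IBGAux.QQ_le_two G T (IBGAux.rank G T (π (m + j)).1)
    have he := hInv (m + j)
    nlinarith
  have h5 := (hno (m + j)).2
  linarith
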